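/- For every integer k ≥ 2 and every even integer n ≥ 4, M(n,2k) ≤ (n − 1) · M(n − 2, 2k). -/

import Mathlib

open SimpleGraph

/-- `G` contains a cycle of length `k` as a subgraph. -/
def ContainsCycleLen {V : Type*} (G : SimpleGraph V) (k : ℕ) : Prop :=
  ∃ (u : V) (w : G.Walk u u), w.IsCycle ∧ w.length = k

/-- `H` is a Hamiltonian path of the complete graph on `Fin n`:
it is the path graph on `n` vertices up to a relabeling of the vertices. -/
def IsHamPathGraph {n : ℕ} (H : SimpleGraph (Fin n)) : Prop :=
  ∃ σ : Equiv.Perm (Fin n), ∀ a b, H.Adj a b ↔ (pathGraph n).Adj (σ a) (σ b)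

/-- The maximum size of a family of Hamiltonian paths of `K_n` that are
pairwise `C_k`-creating. -/
noncomputable def Hnum (n k : ℕ) : ℕ :=
  sSup {m | ∃ F : Finset (SimpleGraph (Fin n)), F.card = m ∧
    (∀ G ∈ F, IsHamPathGraph G) ∧
    ∀ G₁ ∈ F, ∀ G₂ ∈ F, G₁ ≠ G₂ → ContainsCycleLen (G₁ ⊔ G₂) k}

/-- `H` is a perfect matching (as a graph): every vertex has a unique neighbor. -/
def IsPMGraph {V : Type*} (H : SimpleGraph V) : Prop :=
  ∀ v : V, ∃! w : V, H.Adj v w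

/-- The maximum size of a family of perfect matchings of `K_n` that are
pairwise `C_k`-creating. -/
noncomputable def Mnum (n k : ℕ) : ℕ :=
  sSup {m | ∃ F : Finset (SimpleGraph (Fin n)), F.card = m ∧
    (∀ G ∈ F, IsPMGraph G) ∧
    ∀ G₁ ∈ F, ∀ G₂ ∈ F, G₁ ≠ G₂ → ContainsCycleLen (G₁ ⊔ G₂) k}

section Aux

variable {V W : Type*}

/-- The homomorphism from a comap graph to the original graph. -/
def homf (f : V ↪ W) (Γ : SimpleGraph W) : Γ.comap f →g Γ :=
  ⟨f, fun h => h⟩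

lemma lift_walk (f : V ↪ W) (Γ : SimpleGraph W) :
    ∀ {x y : W} (p : Γ.Walk x y), (∀ v ∈ p.support, ∃ c, f c = v) →
    ∀ {a b : V} (ha : f a = x) (hb : f b = y),
    ∃ q : (Γ.comap f).Walk a b, q.map (homf f Γ) = p.copy ha.symm hb.symm := by
  intro x y p
  induction p with
  | nil =>
    intro hs a b ha hb
    subst ha
    have : b = a := f.injective hb
    subst this
    exact ⟨Walk.nil, rfl⟩
  | @cons u v w h t ih =>
    intro hs a b ha hb
    subst ha; subst hb
    obtain ⟨c, hc⟩ := hs v (by simp [Walk.support_cons])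
    subst hc
    obtain ⟨q, hq⟩ := ih (fun v hv => hs v (by simp [Walk.support_cons, hv])) rfl rfl
    have h' : (Γ.comap f).Adj a c := h
    exact ⟨Walk.cons h' q, by simp [Walk.map_cons, hq]; rfl⟩

lemma cycle_avoid {Γ : SimpleGraph W} [DecidableEq W] {u z x : W}
    (w : Γ.Walk u u) (hc : w.IsCycle) (hz : ∀ y, Γ.Adj z y → y = x) :
    z ∉ w.support := by
  intro hv
  have hc' := hc.rotate hv
  set w' := w.rotate z hv with hw'
  clear_value w'
  have h3 := hc'.three_le_length
  have hnn : ¬ w'.Nil := by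
    rw [Walk.not_nil_iff_lt_length]; omega
  obtain ⟨a, ha, t, rfl⟩ := Walk.not_nil_iff.mp hnn
  have hpath : t.IsPath := ((Walk.cons_isCycle_iff t ha).mp hc').1
  have hrt : ¬ t.reverse.Nil := by
    rw [Walk.not_nil_iff_lt_length, Walk.length_reverse]
    simp only [Walk.length_cons] at h3; omega
  obtain ⟨b, hb, s, hs⟩ := Walk.not_nil_iff.mp hrt
  have hba : b = a := (hz b hb).trans (hz a ha).symm
  subst hba
  have hspath : s.IsPath := by
    have := hpath.reverse
    rw [hs] at this
    exact this.of_cons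
  have hsnil : s = Walk.nil := by
    have := SimpleGraph.Path.loop_eq ⟨s, hspath⟩
    exact congrArg Subtype.val this
  have ht1 : t.length = 1 := by
    have : t.reverse.length = 1 := by rw [hs, hsnil]; simp
    rwa [Walk.length_reverse] at this
  simp only [Walk.length_cons, ht1] at h3
  omega

lemma pm_comap (f : V ↪ W) {G : SimpleGraph W} (hG : IsPMGraph G) {z j : W}
    (hzj : G.Adj z j)
    (hfz : ∀ a, f a ≠ z ∧ f a ≠ j)
    (hsurj : ∀ w, w ≠ z → w ≠ j → ∃ a, f a = w) :
    IsPMGraph (G.comap f) := by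
  intro a
  obtain ⟨w₀, hw₀, huniq⟩ := hG (f a)
  have hwz : w₀ ≠ z := by
    rintro rfl
    obtain ⟨y, hy, hu⟩ := hG w₀
    have h1 : f a = y := hu _ hw₀.symm
    have h2 : j = y := hu _ hzj
    exact (hfz a).2 (h1.trans h2.symm)
  have hwj : w₀ ≠ j := by
    rintro rfl
    obtain ⟨y, hy, hu⟩ := hG w₀
    have h1 : f a = y := hu _ hw₀.symm
    have h2 : z = y := hu _ hzj.symm
    exact (hfz a).1 (h1.trans h2.symm)
  obtain ⟨b, hb⟩ := hsurj w₀ hwz hwj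
  refine ⟨b, ?_, ?_⟩
  · show G.Adj (f a) (f b); rw [hb]; exact hw₀
  · intro b' hb'
    have : f b' = w₀ := huniq _ hb'
    exact f.injective (this.trans hb.symm)

lemma adj_imp (f : V ↪ W) {G₁ G₂ : SimpleGraph W} {z j : W}
    (h₁ : IsPMGraph G₁)
    (hzj₁ : G₁.Adj z j) (hzj₂ : G₂.Adj z j)
    (hsurj : ∀ w, w ≠ z → w ≠ j → ∃ a, f a = w)
    (hle : ∀ a b, G₁.Adj (f a) (f b) → G₂.Adj (f a) (f b))
    {v w : W} (hvw : G₁.Adj v w) : G₂.Adj v w := by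
  by_cases hvz : v = z
  · subst hvz
    obtain ⟨y, hy, hu⟩ := h₁ v
    have : w = j := (hu _ hvw).trans (hu _ hzj₁).symm
    subst this; exact hzj₂
  by_cases hvj : v = j
  · subst hvj
    obtain ⟨y, hy, hu⟩ := h₁ v
    have : w = z := (hu _ hvw).trans (hu _ hzj₁.symm).symm
    subst this; exact hzj₂.symm
  by_cases hwz : w = z
  · subst hwz
    obtain ⟨y, hy, hu⟩ := h₁ w
    have : v = j := (hu _ hvw.symm).trans (hu _ hzj₁).symm
    subst this; exact hzj₂.symm
  by_cases hwj : w = j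
  · subst hwj
    obtain ⟨y, hy, hu⟩ := h₁ w
    have : v = z := (hu _ hvw.symm).trans (hu _ hzj₁.symm).symm
    subst this; exact hzj₂
  obtain ⟨a, ha⟩ := hsurj v hvz hvj
  obtain ⟨b, hb⟩ := hsurj w hwz hwj
  subst ha; subst hb
  exact hle a b hvw

end Aux

/-- `M(n,2k) ≤ (n-1) M(n-2, 2k)` for every `k ≥ 2` and even `n ≥ 4`. -/
theorem stmt_10 (k n : ℕ) (hk : 2 ≤ k) (hn : 4 ≤ n) (hne : Even n) :
    Mnum n (2 * k) ≤ (n - 1) * Mnum (n - 2) (2 * k) := by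
  classical
  have hn0 : 0 < n := by omega
  set z : Fin n := ⟨0, hn0⟩ with hzdef
  apply csSup_le'
  rintro m ⟨F, rfl, hPM, hCyc⟩
  set pt : SimpleGraph (Fin n) → Fin n := fun G =>
    if h : ∃ w, G.Adj z w then h.choose else z with hptdef
  have hpt : ∀ G ∈ F, G.Adj z (pt G) := by
    intro G hG
    obtain ⟨y, hy, -⟩ := hPM G hG z
    have h : ∃ w, G.Adj z w := ⟨y, hy⟩
    show G.Adj z (pt G)
    rw [hptdef]
    simp only [dif_pos h]
    exact h.choose_spec
  have hcard : F.card = ∑ j ∈ Finset.univ.erase z, (F.filter fun G => pt G = j).card := by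
    apply Finset.card_eq_sum_card_fiberwise
    intro G hG
    exact Finset.mem_erase.mpr ⟨(hpt G hG).ne', Finset.mem_univ _⟩
  rw [hcard]
  have hbound : ∀ j ∈ Finset.univ.erase z,
      (F.filter fun G => pt G = j).card ≤ Mnum (n - 2) (2 * k) := by
    intro j hj
    have hjz : j ≠ z := (Finset.mem_erase.mp hj).1
    set s : Finset (Fin n) := ({z, j} : Finset (Fin n))ᶜ with hsdef
    have hscard : s.card = n - 2 := by
      rw [hsdef, Finset.card_compl, Finset.card_pair (Ne.symm hjz)]
      simp
    have e : (↥s) ≃ Fin (n - 2) := Fintype.equivFinOfCardEq (by rw [Fintype.card_coe, hscard])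
    set f : Fin (n - 2) ↪ Fin n := e.symm.toEmbedding.trans (Function.Embedding.subtype _)
      with hfdef
    have hfz : ∀ a, f a ≠ z ∧ f a ≠ j := by
      intro a
      have h2 : (↑(e.symm a) : Fin n) ∉ ({z, j} : Finset (Fin n)) :=
        Finset.mem_compl.mp (e.symm a).2
      simp only [Finset.mem_insert, Finset.mem_singleton] at h2
      push_neg at h2
      exact h2
    have hsurj : ∀ w, w ≠ z → w ≠ j → ∃ a, f a = w := by
      intro w hwz hwj
      have hw : w ∈ s := by rw [hsdef]; simp [hwz, hwj]
      refine ⟨e ⟨w, hw⟩, ?_⟩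
      simp [hfdef]
    have hmem : ∀ G ∈ F.filter (fun G => pt G = j), G ∈ F ∧ IsPMGraph G ∧ G.Adj z j := by
      intro G hG
      obtain ⟨hGF, hGj⟩ := Finset.mem_filter.mp hG
      exact ⟨hGF, hPM G hGF, hGj ▸ hpt G hGF⟩
    have hinj : Set.InjOn (fun G : SimpleGraph (Fin n) => G.comap (⇑f))
        ↑(F.filter (fun G => pt G = j)) := by
      intro G₁ h₁ G₂ h₂ heq
      simp only [Finset.mem_coe] at h₁ h₂
      obtain ⟨-, hpm₁, hadj₁⟩ := hmem G₁ h₁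
      obtain ⟨-, hpm₂, hadj₂⟩ := hmem G₂ h₂
      have heq' : G₁.comap ⇑f = G₂.comap ⇑f := heq
      have hle12 : ∀ a b, G₁.Adj (f a) (f b) → G₂.Adj (f a) (f b) := by
        intro a b h
        have h' : (G₁.comap ⇑f).Adj a b := h
        rw [heq'] at h'
        exact h'
      have hle21 : ∀ a b, G₂.Adj (f a) (f b) → G₁.Adj (f a) (f b) := by
        intro a b h
        have h' : (G₂.comap ⇑f).Adj a b := h
        rw [← heq'] at h'
        exact h'
      ext v w
      exact ⟨adj_imp f hpm₁ hadj₁ hadj₂ hsurj hle12,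
             adj_imp f hpm₂ hadj₂ hadj₁ hsurj hle21⟩
    rw [← Finset.card_image_of_injOn hinj]
    have hbdd : BddAbove {m | ∃ F : Finset (SimpleGraph (Fin (n - 2))), F.card = m ∧
        (∀ G ∈ F, IsPMGraph G) ∧
        ∀ G₁ ∈ F, ∀ G₂ ∈ F, G₁ ≠ G₂ → ContainsCycleLen (G₁ ⊔ G₂) (2 * k)} := by
      refine ⟨Fintype.card (SimpleGraph (Fin (n - 2))), ?_⟩
      rintro m ⟨F₀, rfl, -⟩
      exact Finset.card_le_univ F₀
    apply le_csSup hbdd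
    refine ⟨(F.filter (fun G => pt G = j)).image (fun G : SimpleGraph (Fin n) => G.comap (⇑f)), rfl, ?_, ?_⟩
    · intro G' hG'
      obtain ⟨G, hG, rfl⟩ := Finset.mem_image.mp hG'
      obtain ⟨-, hpm, hadj⟩ := hmem G hG
      exact pm_comap f hpm hadj hfz hsurj
    · intro G₁' h₁' G₂' h₂' hne'
      obtain ⟨G₁, h₁, rfl⟩ := Finset.mem_image.mp h₁'
      obtain ⟨G₂, h₂, rfl⟩ := Finset.mem_image.mp h₂'
      obtain ⟨hF₁, hpm₁, hadj₁⟩ := hmem G₁ h₁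
      obtain ⟨hF₂, hpm₂, hadj₂⟩ := hmem G₂ h₂
      have hG12 : G₁ ≠ G₂ := fun h => hne' (by rw [h])
      obtain ⟨u, w, hw, hlen⟩ := hCyc G₁ hF₁ G₂ hF₂ hG12
      have hnz : ∀ y, (G₁ ⊔ G₂).Adj z y → y = j := by
        intro y hy
        rw [SimpleGraph.sup_adj] at hy
        rcases hy with h | h
        · obtain ⟨y₀, hy₀, hu⟩ := hpm₁ z
          exact (hu _ h).trans (hu _ hadj₁).symm
        · obtain ⟨y₀, hy₀, hu⟩ := hpm₂ z
          exact (hu _ h).trans (hu _ hadj₂).symm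
      have hnj : ∀ y, (G₁ ⊔ G₂).Adj j y → y = z := by
        intro y hy
        rw [SimpleGraph.sup_adj] at hy
        rcases hy with h | h
        · obtain ⟨y₀, hy₀, hu⟩ := hpm₁ j
          exact (hu _ h).trans (hu _ hadj₁.symm).symm
        · obtain ⟨y₀, hy₀, hu⟩ := hpm₂ j
          exact (hu _ h).trans (hu _ hadj₂.symm).symm
      have hzsup := cycle_avoid w hw hnz
      have hjsup := cycle_avoid w hw hnj
      have hsup : ∀ v ∈ w.support, ∃ c, f c = v := by
        intro v hv
        exact hsurj v (fun h => hzsup (h ▸ hv)) (fun h => hjsup (h ▸ hv))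
      obtain ⟨a, ha⟩ := hsup u (Walk.start_mem_support w)
      subst ha
      obtain ⟨q, hq⟩ := lift_walk f (G₁ ⊔ G₂) w hsup rfl rfl
      rw [Walk.copy_rfl_rfl] at hq
      have hqc : q.IsCycle := by
        rw [← Walk.map_isCycle_iff_of_injective (p := q) (f := homf f (G₁ ⊔ G₂)) f.injective,
          hq]
        exact hw
      have hql : q.length = 2 * k := by
        have h' : (q.map (homf f (G₁ ⊔ G₂))).length = 2 * k := by rw [hq]; exact hlen
        simpa using h'
      have hcomap : (G₁ ⊔ G₂).comap ⇑f = G₁.comap ⇑f ⊔ G₂.comap ⇑f := by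
        ext a b; simp
      rw [← hcomap]
      exact ⟨a, q, hqc, hql⟩
  refine le_trans (Finset.sum_le_card_nsmul _ _ _ hbound) ?_
  rw [Finset.card_erase_of_mem (Finset.mem_univ _), Finset.card_univ, Fintype.card_fin]
  simp [smul_eq_mul]
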